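/- Orthogonality of the relativistic vorticity to the velocity: Let O ⊂ ℝ^{1+d} be open and let (ϱ,u) be a C¹ solution of the relativistic Euler equations on O with ϱ > 0, p(ϱ)+ϱ > 0, u⁰ > 0 and u^α u_α = −1. Let f : (0,∞) → (0,∞) be C¹ with f'(y)/f(y) = p'(y)/(p(y)+y), set v_α = f(ϱ) u_α, and define the vorticity two-form ω_{αβ} = ∂_α v_β − ∂_β v_α. Then v^α ω_{αβ} = 0 on O for every β. -/

import Mathlib

open Set

noncomputable section

/-- The diagonal entries of the Minkowski metric `m = diag(−1,1,…,1)` on `ℝ^{1+d}`. -/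
def mlt (d : ℕ) (α : Fin (d + 1)) : ℝ := if α = 0 then -1 else 1

/-- Partial derivative `∂_μ` of a function on `ℝ^{1+d}`. -/
def pder (d : ℕ) (μ : Fin (d + 1)) (F : (Fin (d + 1) → ℝ) → ℝ) (q : Fin (d + 1) → ℝ) : ℝ :=
  fderiv ℝ F q (Pi.single μ 1)

/-- The relativistic Euler equations with equation of state `peos` on the set `O`:
`u^μ ∂_μ ϱ + (p+ϱ) ∂_μ u^μ = 0` and `(p+ϱ) u^μ ∂_μ u_α + Π^μ_α ∂_μ p = 0`, where
`Π^μ_α = δ^μ_α + u^μ u_α` and indices are lowered with `m = diag(−1,1,…,1)`. -/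
def RelEuler (d : ℕ) (peos : ℝ → ℝ) (O : Set (Fin (d + 1) → ℝ))
    (ϱ : (Fin (d + 1) → ℝ) → ℝ) (u : (Fin (d + 1) → ℝ) → Fin (d + 1) → ℝ) : Prop :=
  ∀ q ∈ O,
    ((∑ μ, u q μ * pder d μ ϱ q)
      + (peos (ϱ q) + ϱ q) * ∑ μ, pder d μ (fun z => u z μ) q = 0) ∧
    ∀ α, (peos (ϱ q) + ϱ q) * (∑ μ, u q μ * pder d μ (fun z => mlt d α * u z α) q)
        + pder d α (fun z => peos (ϱ z)) q
        + mlt d α * u q α * ∑ μ, u q μ * pder d μ (fun z => peos (ϱ z)) q = 0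

/-- The lowered good velocity `v_α = f(ϱ) m_{αα} u^α` (no summation; `m` diagonal). -/
def vLow (d : ℕ) (f : ℝ → ℝ) (ϱ : (Fin (d + 1) → ℝ) → ℝ)
    (u : (Fin (d + 1) → ℝ) → Fin (d + 1) → ℝ) (α : Fin (d + 1))
    (z : Fin (d + 1) → ℝ) : ℝ :=
  f (ϱ z) * mlt d α * u z α

/-- The relativistic vorticity two-form `ω_{αβ} = ∂_α v_β − ∂_β v_α`. -/
def vort (d : ℕ) (f : ℝ → ℝ) (ϱ : (Fin (d + 1) → ℝ) → ℝ)
    (u : (Fin (d + 1) → ℝ) → Fin (d + 1) → ℝ) (α β : Fin (d + 1))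
    (q : Fin (d + 1) → ℝ) : ℝ :=
  pder d α (vLow d f ϱ u β) q - pder d β (vLow d f ϱ u α) q


lemma real_fderiv_apply (g : ℝ → ℝ) (x c : ℝ) : fderiv ℝ g x c = c * deriv g x := by
  have h : c = c • (1 : ℝ) := by simp
  rw [h, (fderiv ℝ g x).map_smul, smul_eq_mul, smul_eq_mul, mul_one, fderiv_apply_one_eq_deriv]

lemma pder_mul {d : ℕ} (μ : Fin (d + 1)) {A B : (Fin (d + 1) → ℝ) → ℝ}
    {q : Fin (d + 1) → ℝ} (hA : DifferentiableAt ℝ A q) (hB : DifferentiableAt ℝ B q) :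
    pder d μ (fun z => A z * B z) q = pder d μ A q * B q + A q * pder d μ B q := by
  unfold pder
  rw [fderiv_fun_mul hA hB]
  simp [smul_eq_mul]
  ring

lemma pder_const_mul {d : ℕ} (μ : Fin (d + 1)) (c : ℝ) {A : (Fin (d + 1) → ℝ) → ℝ}
    {q : Fin (d + 1) → ℝ} (hA : DifferentiableAt ℝ A q) :
    pder d μ (fun z => c * A z) q = c * pder d μ A q := by
  unfold pder
  rw [fderiv_const_mul hA]
  simp

lemma pder_mul_const {d : ℕ} (μ : Fin (d + 1)) (c : ℝ) {A : (Fin (d + 1) → ℝ) → ℝ}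
    {q : Fin (d + 1) → ℝ} (hA : DifferentiableAt ℝ A q) :
    pder d μ (fun z => A z * c) q = pder d μ A q * c := by
  unfold pder
  rw [fderiv_mul_const hA]
  simp [mul_comm]

lemma pder_comp {d : ℕ} (μ : Fin (d + 1)) (g : ℝ → ℝ) {ϱ : (Fin (d + 1) → ℝ) → ℝ}
    {q : Fin (d + 1) → ℝ} (hg : DifferentiableAt ℝ g (ϱ q)) (hϱ : DifferentiableAt ℝ ϱ q) :
    pder d μ (fun z => g (ϱ z)) q = deriv g (ϱ q) * pder d μ ϱ q := by
  unfold pder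
  rw [show (fun z => g (ϱ z)) = g ∘ ϱ from rfl, fderiv_comp q hg hϱ,
    ContinuousLinearMap.comp_apply, real_fderiv_apply]
  ring

lemma pder_sum {d : ℕ} (μ : Fin (d + 1)) {ι : Type*} (s : Finset ι)
    {A : ι → (Fin (d + 1) → ℝ) → ℝ} {q : Fin (d + 1) → ℝ}
    (h : ∀ i ∈ s, DifferentiableAt ℝ (A i) q) :
    pder d μ (fun z => ∑ i ∈ s, A i z) q = ∑ i ∈ s, pder d μ (A i) q := by
  unfold pder
  rw [fderiv_fun_sum h]
  simp

lemma pder_eventually_const {d : ℕ} (μ : Fin (d + 1)) {F : (Fin (d + 1) → ℝ) → ℝ}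
    {q : Fin (d + 1) → ℝ} {c : ℝ} (h : F =ᶠ[nhds q] fun _ => c) :
    pder d μ F q = 0 := by
  unfold pder
  rw [h.fderiv_eq]
  simp

/-- **Orthogonality of the relativistic vorticity to the velocity** (equation (1.21)):
for a `C¹` solution of the relativistic Euler equations, `v^α ω_{αβ} = 0`. -/
theorem relativistic_vorticity_orthogonality
    (d : ℕ) (hd : 1 ≤ d) (peos f : ℝ → ℝ)
    (O : Set (Fin (d + 1) → ℝ)) (hO : IsOpen O)
    (ϱ : (Fin (d + 1) → ℝ) → ℝ) (u : (Fin (d + 1) → ℝ) → Fin (d + 1) → ℝ)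
    (hp : ContDiffOn ℝ 1 peos (Ioi 0))
    (hϱ : ContDiffOn ℝ 1 ϱ O) (hu : ContDiffOn ℝ 1 u O)
    (hϱpos : ∀ q ∈ O, 0 < ϱ q)
    (hpϱ : ∀ q ∈ O, 0 < peos (ϱ q) + ϱ q)
    (hu0 : ∀ q ∈ O, 0 < u q 0)
    (hnorm : ∀ q ∈ O, ∑ α, mlt d α * u q α * u q α = -1)
    (hf : ContDiffOn ℝ 1 f (Ioi 0)) (hfpos : ∀ y > (0 : ℝ), 0 < f y)
    (hfode : ∀ y > (0 : ℝ), deriv f y * (peos y + y) = deriv peos y * f y)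
    (heuler : RelEuler d peos O ϱ u) :
    ∀ q ∈ O, ∀ β : Fin (d + 1),
      ∑ α, f (ϱ q) * u q α * vort d f ϱ u α β q = 0 := by
  intro q hq β
  have hqO : O ∈ nhds q := hO.mem_nhds hq
  have hϱd : DifferentiableAt ℝ ϱ q := (hϱ.differentiableOn one_ne_zero).differentiableAt hqO
  have hud : ∀ α, DifferentiableAt ℝ (fun z => u z α) q :=
    differentiableAt_pi.mp ((hu.differentiableOn one_ne_zero).differentiableAt hqO)
  have hϱq : (0 : ℝ) < ϱ q := hϱpos q hq
  have hfd : DifferentiableAt ℝ f (ϱ q) :=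
    (hf.differentiableOn one_ne_zero).differentiableAt (isOpen_Ioi.mem_nhds hϱq)
  have hpd : DifferentiableAt ℝ peos (ϱ q) :=
    (hp.differentiableOn one_ne_zero).differentiableAt (isOpen_Ioi.mem_nhds hϱq)
  have hfϱ : DifferentiableAt ℝ (fun z => f (ϱ z)) q := hfd.comp q hϱd
  -- derivative of the lowered good velocity
  have hA : ∀ α μ : Fin (d + 1), pder d μ (vLow d f ϱ u α) q =
      deriv f (ϱ q) * pder d μ ϱ q * (mlt d α * u q α)
        + f (ϱ q) * (mlt d α * pder d μ (fun z => u z α) q) := by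
    intro α μ
    have h1 : pder d μ (fun z => (f (ϱ z) * mlt d α) * u z α) q
        = pder d μ (fun z => f (ϱ z) * mlt d α) q * u q α
          + (f (ϱ q) * mlt d α) * pder d μ (fun z => u z α) q :=
      pder_mul μ (hfϱ.mul_const _) (hud α)
    have h2 : pder d μ (fun z => f (ϱ z) * mlt d α) q
        = pder d μ (fun z => f (ϱ z)) q * mlt d α := pder_mul_const μ _ hfϱ
    have h3 : pder d μ (fun z => f (ϱ z)) q = deriv f (ϱ q) * pder d μ ϱ q :=
      pder_comp μ f hfd hϱd
    show pder d μ (fun z => f (ϱ z) * mlt d α * u z α) q = _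
    rw [h1, h2, h3]
    ring
  -- chain rule for the pressure
  have hB : ∀ μ : Fin (d + 1), pder d μ (fun z => peos (ϱ z)) q
      = deriv peos (ϱ q) * pder d μ ϱ q := fun μ => pder_comp μ peos hpd hϱd
  -- differentiating the normalization
  have hC : ∀ μ : Fin (d + 1),
      ∑ α, mlt d α * u q α * pder d μ (fun z => u z α) q = 0 := by
    intro μ
    have hev : (fun z => ∑ α, mlt d α * u z α * u z α) =ᶠ[nhds q] fun _ => (-1 : ℝ) :=
      Filter.eventuallyEq_of_mem hqO fun z hz => hnorm z hz
    have h0 : pder d μ (fun z => ∑ α, mlt d α * u z α * u z α) q = 0 :=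
      pder_eventually_const μ hev
    have hsum : pder d μ (fun z => ∑ α, mlt d α * u z α * u z α) q
        = ∑ α, pder d μ (fun z => mlt d α * u z α * u z α) q :=
      pder_sum μ _ fun α _ => ((hud α).const_mul _).mul (hud α)
    have hterm : ∀ α : Fin (d + 1), pder d μ (fun z => mlt d α * u z α * u z α) q
        = 2 * (mlt d α * u q α * pder d μ (fun z => u z α) q) := by
      intro α
      have h4 : pder d μ (fun z => (mlt d α * u z α) * u z α) q
          = pder d μ (fun z => mlt d α * u z α) q * u q α
            + (mlt d α * u q α) * pder d μ (fun z => u z α) q :=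
        pder_mul μ ((hud α).const_mul _) (hud α)
      have h5 : pder d μ (fun z => mlt d α * u z α) q
          = mlt d α * pder d μ (fun z => u z α) q := pder_const_mul μ _ (hud α)
      show pder d μ (fun z => mlt d α * u z α * u z α) q = _
      rw [h4, h5]
      ring
    rw [hsum, Finset.sum_congr rfl fun α _ => hterm α, ← Finset.mul_sum] at h0
    linarith
  -- the momentum Euler equation at index β
  have heul := (heuler q hq).2 β
  have e1 : ∑ μ, u q μ * pder d μ (fun z => mlt d β * u z β) q
      = mlt d β * ∑ μ, u q μ * pder d μ (fun z => u z β) q := by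
    rw [Finset.mul_sum]
    exact Finset.sum_congr rfl fun μ _ => by rw [pder_const_mul μ _ (hud β)]; ring
  have e2 : ∑ μ, u q μ * pder d μ (fun z => peos (ϱ z)) q
      = deriv peos (ϱ q) * ∑ μ, u q μ * pder d μ ϱ q := by
    rw [Finset.mul_sum]
    exact Finset.sum_congr rfl fun μ _ => by rw [hB μ]; ring
  rw [e1, hB β, e2] at heul
  have hfode' : deriv f (ϱ q) * (peos (ϱ q) + ϱ q) = deriv peos (ϱ q) * f (ϱ q) :=
    hfode (ϱ q) hϱq
  have hPne : (peos (ϱ q) + ϱ q) ≠ 0 := ne_of_gt (hpϱ q hq)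
  -- rewrite the goal sum
  have hsummand : ∀ α : Fin (d + 1), f (ϱ q) * u q α * vort d f ϱ u α β q =
      (f (ϱ q) * deriv f (ϱ q) * (mlt d β * u q β)) * (u q α * pder d α ϱ q)
      + (f (ϱ q) * f (ϱ q) * mlt d β) * (u q α * pder d α (fun z => u z β) q)
      - (f (ϱ q) * deriv f (ϱ q) * pder d β ϱ q) * (mlt d α * u q α * u q α)
      - (f (ϱ q) * f (ϱ q)) * (mlt d α * u q α * pder d β (fun z => u z α) q) := by
    intro α
    show f (ϱ q) * u q α * (pder d α (vLow d f ϱ u β) q - pder d β (vLow d f ϱ u α) q) = _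
    rw [hA β α, hA α β]
    ring
  rw [Finset.sum_congr rfl fun α _ => hsummand α]
  simp only [Finset.sum_sub_distrib, Finset.sum_add_distrib, ← Finset.mul_sum]
  rw [hnorm q hq, hC β]
  apply mul_left_cancel₀ hPne
  linear_combination (f (ϱ q) * f (ϱ q)) * heul
    + (f (ϱ q) * mlt d β * u q β * (∑ μ, u q μ * pder d μ ϱ q)
        + f (ϱ q) * pder d β ϱ q) * hfode'
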